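/- Let g = 0, n ≥ 1, α ∈ (0,1/2)^n. Suppose (d,e) and (d',e') are pairs with e, e' ∈ {0,1}^n, d, d' ∈ ℤ, both satisfying: n + 2d + |e| - 1 = 0 (resp. n + 2d' + |e'| - 1 = 0) and -Σ_i β_i(α,e) < d (resp. -Σ_i β_i(α,e') < d'), where β_i(α,e) = e_i + (-1)^{e_i}α_i. Then (d,e) = (d',e'). -/
import Mathlib


/-- Genus 0: uniqueness of the pair (d,e) with vanishing Morse index satisfying (3a). -/
theorem stmt_2 (n : ℕ) (hn : 1 ≤ n) (α : Fin n → ℝ)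
    (hα : ∀ i, 0 < α i ∧ α i < 1/2)
    (e e' : Fin n → ℕ) (he : ∀ i, e i ≤ 1) (he' : ∀ i, e' i ≤ 1)
    (d d' : ℤ)
    (hlam : (n : ℤ) + 2 * d + (∑ i, (e i : ℤ)) - 1 = 0)
    (hlam' : (n : ℤ) + 2 * d' + (∑ i, (e' i : ℤ)) - 1 = 0)
    (hlow : -(∑ i, ((e i : ℝ) + (-1 : ℝ) ^ (e i) * α i)) < (d : ℝ))
    (hlow' : -(∑ i, ((e' i : ℝ) + (-1 : ℝ) ^ (e' i) * α i)) < (d' : ℝ)) :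
    d = d' ∧ e = e' := by
  have hlamR : (n:ℝ) + 2*(d:ℝ) + (∑ i, (e i : ℝ)) - 1 = 0 := by exact_mod_cast hlam
  have hlamR' : (n:ℝ) + 2*(d':ℝ) + (∑ i, (e' i : ℝ)) - 1 = 0 := by exact_mod_cast hlam'
  set c : Fin n → ℝ := fun i => (e i : ℝ) + 2*((-1:ℝ)^(e i) * α i) with hc
  set c2 : Fin n → ℝ := fun i => (e' i : ℝ) + 2*((-1:ℝ)^(e' i) * α i) with hc2
  have h1 : (n:ℝ) - 1 < ∑ i, c i := by
    have e1 : ∑ i, ((e i:ℝ) + (-1:ℝ)^(e i) * α i)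
        = ∑ i, (e i:ℝ) + ∑ i, (-1:ℝ)^(e i)*α i := Finset.sum_add_distrib
    have e2 : ∑ i, c i = ∑ i, (e i:ℝ) + 2 * ∑ i, (-1:ℝ)^(e i)*α i := by
      rw [hc]
      rw [Finset.sum_add_distrib, Finset.mul_sum]
    linarith
  have h1' : (n:ℝ) - 1 < ∑ i, c2 i := by
    have e1 : ∑ i, ((e' i:ℝ) + (-1:ℝ)^(e' i) * α i)
        = ∑ i, (e' i:ℝ) + ∑ i, (-1:ℝ)^(e' i)*α i := Finset.sum_add_distrib
    have e2 : ∑ i, c2 i = ∑ i, (e' i:ℝ) + 2 * ∑ i, (-1:ℝ)^(e' i)*α i := by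
      rw [hc2]
      rw [Finset.sum_add_distrib, Finset.mul_sum]
    linarith
  have hcb : ∀ i, c i < 1 := by
    intro i
    have h := hα i
    have := he i
    interval_cases h : e i <;> simp [hc, h] <;> linarith
  have hcb2 : ∀ i, c2 i < 1 := by
    intro i
    have h := hα i
    have := he' i
    interval_cases h : e' i <;> simp [hc2, h] <;> linarith
  -- the set of differing indices
  classical
  set S : Finset (Fin n) := Finset.univ.filter (fun i => e i ≠ e' i) with hS
  have hsum_on_S : ∀ i ∈ S, c i + c2 i = 1 := by
    intro i hi
    have hne : e i ≠ e' i := by simpa [hS] using hi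
    have h1i := he i
    have h2i := he' i
    have hcases : e i = 0 ∧ e' i = 1 ∨ e i = 1 ∧ e' i = 0 := by omega
    rcases hcases with ⟨h, h'⟩ | ⟨h, h'⟩ <;>
      · simp only [hc, hc2, h, h']
        push_cast
        ring
  have hcard : S.card ≤ 1 := by
    by_contra hgt
    push_neg at hgt
    have hsplit : ∑ i, (c i + c2 i)
        = ∑ i ∈ S, (c i + c2 i) + ∑ i ∈ Sᶜ, (c i + c2 i) :=
      (Finset.sum_add_sum_compl S _).symm
    have hSsum : ∑ i ∈ S, (c i + c2 i) = S.card := by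
      rw [Finset.sum_congr rfl hsum_on_S]
      simp
    have hScsum : ∑ i ∈ Sᶜ, (c i + c2 i) ≤ 2 * Sᶜ.card := by
      calc ∑ i ∈ Sᶜ, (c i + c2 i) ≤ ∑ _i ∈ Sᶜ, (2:ℝ) :=
            Finset.sum_le_sum (fun i _ => by have := hcb i; have := hcb2 i; linarith)
        _ = 2 * Sᶜ.card := by rw [Finset.sum_const]; ring
    have hcards : S.card + Sᶜ.card = n := by
      rw [Finset.card_add_card_compl]; simp
    have htot : ∑ i, (c i + c2 i) = ∑ i, c i + ∑ i, c2 i := Finset.sum_add_distrib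
    -- 2n - 2 < |S| + 2|Sᶜ| = 2n - |S|
    have hineq : (2:ℝ)*n - 2 < S.card + 2 * Sᶜ.card := by
      rw [← hSsum] at *
      linarith [hScsum, h1, h1']
    have : (S.card : ℝ) < 2 := by
      have : (S.card : ℝ) + Sᶜ.card = n := by exact_mod_cast hcards
      linarith
    have : S.card < 2 := by exact_mod_cast this
    omega
  have heq : e = e' := by
    by_contra hne
    have hSne : S.Nonempty := by
      rcases Function.ne_iff.mp hne with ⟨i, hi⟩
      exact ⟨i, by simp [hS, hi]⟩
    have hcard1 : S.card = 1 := le_antisymm hcard (Finset.card_pos.mpr hSne)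
    obtain ⟨i, hi⟩ := Finset.card_eq_one.mp hcard1
    have hmem : i ∈ S := hi ▸ Finset.mem_singleton_self i
    have hnei : e i ≠ e' i := by simpa [hS] using hmem
    have hother : ∀ j, j ≠ i → e j = e' j := by
      intro j hj
      by_contra h
      have : j ∈ S := by simp [hS, h]
      rw [hi] at this
      exact hj (Finset.mem_singleton.mp this)
    have hdiff : ∑ j, (e j : ℤ) - ∑ j, (e' j : ℤ) = (e i : ℤ) - (e' i : ℤ) := by
      rw [← Finset.sum_sub_distrib]
      rw [Finset.sum_eq_single i]
      · intro j _ hj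
        rw [hother j hj]; ring
      · intro h; exact absurd (Finset.mem_univ i) h
    have h1i := he i
    have h2i := he' i
    omega
  subst heq
  refine ⟨?_, rfl⟩
  omega
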